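/- Let k = 4m+1 with m ≥ 0, r an odd positive integer, and n an integer with gcd(n,r)=1. Then the number of solutions of x_1²+...+x_k² ≡ n (mod r) equals r^{4m} · ∑_{d|r} (μ²(d)/d^{2m}) · (n|d). -/

import Mathlib

open ArithmeticFunction

open Finset

def sqCount (R : Type*) [CommRing R] [Fintype R] [DecidableEq R] (k : ℕ) (t : R) : ℕ :=
  (Finset.univ.filter (fun x : Fin k → R => ∑ i, x i ^ 2 = t)).card

variable {R : Type*} [CommRing R] [Fintype R] [DecidableEq R]

theorem sqCount_total (k : ℕ) : ∑ t : R, sqCount R k t = Fintype.card R ^ k := by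
  classical
  have h := Finset.card_eq_sum_card_fiberwise
    (f := fun x : Fin k → R => ∑ i, x i ^ 2) (s := Finset.univ) (t := Finset.univ)
    (fun x _ => mem_univ _)
  rw [Finset.card_univ] at h
  have : Fintype.card (Fin k → R) = Fintype.card R ^ k := by
    simp [Fintype.card_fun]
  rw [this] at h
  exact h.symm

theorem sqCount_conv (k₁ k₂ : ℕ) (t : R) :
    sqCount R (k₁ + k₂) t = ∑ s : R, sqCount R k₁ s * sqCount R k₂ (t - s) := by
  classical
  set e : (Fin (k₁ + k₂) → R) ≃ (Fin k₁ → R) × (Fin k₂ → R) :=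
    (Equiv.arrowCongr finSumFinEquiv.symm (Equiv.refl R)).trans
      (Equiv.sumArrowEquivProdArrow _ _ R) with he
  have hsum : ∀ x : Fin (k₁ + k₂) → R,
      ∑ i, x i ^ 2 = (∑ i, (e x).1 i ^ 2) + (∑ i, (e x).2 i ^ 2) := by
    intro x
    have : ∑ i, x i ^ 2 = ∑ j : Fin k₁ ⊕ Fin k₂, x (finSumFinEquiv j) ^ 2 :=
      (Equiv.sum_comp finSumFinEquiv (fun i => x i ^ 2)).symm
    rw [this, Fintype.sum_sum_type]
    rfl
  have h1 : sqCount R (k₁ + k₂) t =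
      (Finset.univ.filter (fun p : (Fin k₁ → R) × (Fin k₂ → R) =>
        (∑ i, p.1 i ^ 2) + (∑ i, p.2 i ^ 2) = t)).card := by
    refine Finset.card_equiv e ?_
    intro x
    simp only [mem_filter, mem_univ, true_and]
    rw [hsum x]
  rw [h1]
  rw [Finset.card_eq_sum_card_fiberwise
    (f := fun p : (Fin k₁ → R) × (Fin k₂ → R) => ∑ i, p.1 i ^ 2)
    (t := Finset.univ) (fun x _ => mem_univ _)]
  refine Finset.sum_congr rfl (fun s _ => ?_)
  rw [Finset.filter_filter]
  have hset : (Finset.univ.filter (fun p : (Fin k₁ → R) × (Fin k₂ → R) =>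
        ((∑ i, p.1 i ^ 2) + (∑ i, p.2 i ^ 2) = t) ∧ (∑ i, p.1 i ^ 2) = s)) =
      (Finset.univ.filter (fun u : Fin k₁ → R => ∑ i, u i ^ 2 = s)) ×ˢ
      (Finset.univ.filter (fun v : Fin k₂ → R => ∑ i, v i ^ 2 = t - s)) := by
    ext p
    simp only [mem_filter, mem_univ, true_and, Finset.mem_product]
    constructor
    · rintro ⟨h1, h2⟩
      exact ⟨h2, by rw [← h1, h2]; ring⟩
    · rintro ⟨h1, h2⟩
      exact ⟨by rw [h1, h2]; ring, h1⟩
  rw [hset, Finset.card_product]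
  rfl

section PrimeField

variable (p : ℕ) [Fact p.Prime] (hp2 : p ≠ 2)

theorem ringChar_zmod_ne_two (hp2 : p ≠ 2) : ringChar (ZMod p) ≠ 2 := by
  rw [ZMod.ringChar_zmod_n]; exact hp2

theorem sqCount_one_var (t : ZMod p) (hp2 : p ≠ 2) :
    ((sqCount (ZMod p) 1 t : ℤ)) = quadraticChar (ZMod p) t + 1 := by
  rw [← quadraticChar_card_sqrts (ringChar_zmod_ne_two p hp2) t]
  norm_cast
  unfold sqCount
  refine Finset.card_equiv (Equiv.funUnique (Fin 1) (ZMod p)) ?_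
  intro x
  simp [Fin.sum_univ_one, Set.mem_toFinset]

theorem Jsum (t : ZMod p) (ht : t ≠ 0) (hp2 : p ≠ 2) :
    ∑ s : ZMod p, quadraticChar (ZMod p) s * quadraticChar (ZMod p) (t - s)
      = -quadraticChar (ZMod p) (-1) := by
  set χ := quadraticChar (ZMod p)
  have h0 : ∑ s : ZMod p, χ s * χ (t - s)
      = ∑ s ∈ Finset.univ.erase (0 : ZMod p), χ s * χ (t - s) := by
    rw [← Finset.add_sum_erase _ _ (Finset.mem_univ (0 : ZMod p))]
    simp [χ]
  rw [h0]
  have key : ∀ s ∈ Finset.univ.erase (0 : ZMod p), χ s * χ (t - s) = χ (t * s⁻¹ - 1) := by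
    intro s hs
    have hs0 : s ≠ 0 := (Finset.mem_erase.1 hs).1
    have : t * s⁻¹ - 1 = (s⁻¹) ^ 2 * (s * (t - s)) := by
      field_simp
    rw [this, map_mul, quadraticChar_sq_one' (inv_ne_zero hs0), one_mul, map_mul]
  rw [Finset.sum_congr rfl key]
  have hre : ∑ s ∈ Finset.univ.erase (0 : ZMod p), χ (t * s⁻¹ - 1)
      = ∑ u ∈ Finset.univ.erase (-1 : ZMod p), χ u := by
    refine Finset.sum_nbij' (fun s => t * s⁻¹ - 1) (fun u => t * (u + 1)⁻¹) ?_ ?_ ?_ ?_ ?_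
    · intro s hs
      have hs0 : s ≠ 0 := (Finset.mem_erase.1 hs).1
      refine Finset.mem_erase.2 ⟨?_, Finset.mem_univ _⟩
      intro h
      have : t * s⁻¹ = 0 := by linear_combination h
      exact (mul_ne_zero ht (inv_ne_zero hs0)) this
    · intro u hu
      have hu0 : u ≠ -1 := (Finset.mem_erase.1 hu).1
      have h1 : u + 1 ≠ 0 := fun h => hu0 (by linear_combination h)
      refine Finset.mem_erase.2 ⟨mul_ne_zero ht (inv_ne_zero h1), Finset.mem_univ _⟩
    · intro s hs
      have hs0 : s ≠ 0 := (Finset.mem_erase.1 hs).1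
      field_simp
      rw [sub_add_cancel, div_self ht]
    · intro u hu
      have hu0 : u ≠ -1 := (Finset.mem_erase.1 hu).1
      have h1 : u + 1 ≠ 0 := fun h => hu0 (by linear_combination h)
      field_simp
      ring
    · intro s hs
      rfl
  rw [hre]
  have := quadraticChar_sum_zero (ringChar_zmod_ne_two p hp2)
  rw [← Finset.add_sum_erase _ χ (Finset.mem_univ (-1 : ZMod p))] at this
  linarith [this]

theorem Jzero (hp2 : p ≠ 2) :
    ∑ s : ZMod p, quadraticChar (ZMod p) s * quadraticChar (ZMod p) (0 - s)
      = quadraticChar (ZMod p) (-1) * ((p : ℤ) - 1) := by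
  set χ := quadraticChar (ZMod p)
  have h1 : ∀ s : ZMod p, χ s * χ (0 - s) = χ (-1) * (χ s)^2 := by
    intro s
    have : (0 : ZMod p) - s = -1 * s := by ring
    rw [this, map_mul]
    ring
  rw [Finset.sum_congr rfl (fun s _ => h1 s), ← Finset.mul_sum]
  congr 1
  have h2 : ∀ s : ZMod p, (χ s)^2 = if s = 0 then 0 else 1 := by
    intro s
    split_ifs with h
    · simp [h, χ]
    · exact quadraticChar_sq_one h
  rw [Finset.sum_congr rfl (fun s _ => h2 s)]
  rw [Finset.sum_ite]
  have hp1 : 1 ≤ p := (Fact.out : p.Prime).one_lt.le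
  simp only [Finset.sum_const_zero, Finset.sum_const, nsmul_eq_mul, mul_one, zero_add]
  rw [Finset.filter_ne']
  rw [Finset.card_erase_of_mem (Finset.mem_univ _), Finset.card_univ, ZMod.card]
  push_cast [Nat.cast_sub hp1]
  ring

theorem sqCount_two_var (t : ZMod p) (hp2 : p ≠ 2) :
    ((sqCount (ZMod p) 2 t : ℤ)) = (p : ℤ) +
      quadraticChar (ZMod p) (-1) * (if t = 0 then (p : ℤ) - 1 else -1) := by
  set χ := quadraticChar (ZMod p)
  have h2 : (2 : ℕ) = 1 + 1 := by norm_num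
  rw [h2, sqCount_conv]
  push_cast
  have hsum1 : ∑ s : ZMod p, ((sqCount (ZMod p) 1 s : ℤ)) * ((sqCount (ZMod p) 1 (t - s) : ℤ))
      = ∑ s : ZMod p, (χ s + 1) * (χ (t - s) + 1) :=
    Finset.sum_congr rfl (fun s _ => by
      rw [sqCount_one_var p s hp2, sqCount_one_var p (t - s) hp2])
  rw [hsum1]
  have expand : ∀ s : ZMod p, (χ s + 1) * (χ (t - s) + 1)
      = χ s * χ (t - s) + χ s + (χ (t - s) + 1) := by intro s; ring
  rw [Finset.sum_congr rfl (fun s _ => expand s)]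
  rw [Finset.sum_add_distrib, Finset.sum_add_distrib, Finset.sum_add_distrib]
  have hχ0 : ∑ s : ZMod p, χ s = 0 := quadraticChar_sum_zero (ringChar_zmod_ne_two p hp2)
  have hχ1 : ∑ s : ZMod p, χ (t - s) = 0 :=
    (Fintype.sum_equiv (Equiv.subLeft t) (fun s => χ (t - s)) (fun s => χ s)
      (fun s => rfl)).trans hχ0
  have hcard : ∑ _s : ZMod p, (1 : ℤ) = (p : ℤ) := by
    simp [Finset.card_univ, ZMod.card]
  rw [hχ0, hχ1, hcard]
  split_ifs with ht
  · subst ht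
    rw [Jzero p hp2]
    ring
  · rw [Jsum p t ht hp2]
    ring

theorem sqCount_four_var (t : ZMod p) (hp2 : p ≠ 2) :
    ((sqCount (ZMod p) 4 t : ℤ)) = (p : ℤ)^3 - p + (if t = 0 then (p : ℤ)^2 else 0) := by
  have hχsq : (quadraticChar (ZMod p) (-1))^2 = 1 :=
    quadraticChar_sq_one (neg_ne_zero.2 one_ne_zero)
  set χ1 : ℤ := quadraticChar (ZMod p) (-1) with hχ1
  have h4 : (4 : ℕ) = 2 + 2 := by norm_num
  rw [h4, sqCount_conv]
  push_cast
  have hsum1 : ∑ s : ZMod p, ((sqCount (ZMod p) 2 s : ℤ)) * ((sqCount (ZMod p) 2 (t - s) : ℤ))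
      = ∑ s : ZMod p, ((p : ℤ) + χ1 * (if s = 0 then (p:ℤ) - 1 else -1))
          * ((p : ℤ) + χ1 * (if t - s = 0 then (p:ℤ) - 1 else -1)) :=
    Finset.sum_congr rfl (fun s _ => by
      rw [sqCount_two_var p s hp2, sqCount_two_var p (t - s) hp2])
  rw [hsum1]
  have expand : ∀ s : ZMod p,
      ((p : ℤ) + χ1 * (if s = 0 then (p:ℤ) - 1 else -1))
          * ((p : ℤ) + χ1 * (if t - s = 0 then (p:ℤ) - 1 else -1))
      = (p:ℤ)^2 + ((p:ℤ) * χ1) * (if s = 0 then (p:ℤ) - 1 else -1)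
        + ((p:ℤ) * χ1) * (if t - s = 0 then (p:ℤ) - 1 else -1)
        + ((if s = 0 then (p:ℤ) else 0) * (if t - s = 0 then (p:ℤ) else 0)
            - (if s = 0 then (p:ℤ) else 0) - (if t - s = 0 then (p:ℤ) else 0) + 1) := by
    intro s
    split_ifs
    · linear_combination ((p:ℤ)-1)^2 * hχsq
    · linear_combination (1-(p:ℤ)) * hχsq
    · linear_combination (1-(p:ℤ)) * hχsq
    · linear_combination hχsq
  rw [Finset.sum_congr rfl (fun s _ => expand s)]
  rw [Finset.sum_add_distrib, Finset.sum_add_distrib, Finset.sum_add_distrib,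
    Finset.sum_add_distrib, Finset.sum_sub_distrib, Finset.sum_sub_distrib,
    ← Finset.mul_sum, ← Finset.mul_sum]
  have hcard : ((Finset.univ : Finset (ZMod p)).card : ℤ) = (p : ℤ) := by
    simp [Finset.card_univ, ZMod.card]
  have hvsplit : ∀ s : ZMod p, (if s = 0 then (p:ℤ) - 1 else -1)
      = (if s = 0 then (p:ℤ) else 0) - 1 := by
    intro s; split_ifs <;> ring
  have hB : ∑ s : ZMod p, (if s = 0 then (p:ℤ) - 1 else -1) = 0 := by
    rw [Finset.sum_congr rfl (fun s _ => hvsplit s), Finset.sum_sub_distrib,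
      Finset.sum_ite_eq' Finset.univ (0 : ZMod p) (fun _ => (p:ℤ)), Finset.sum_const]
    simp [hcard]
  have hC : ∑ s : ZMod p, (if t - s = 0 then (p:ℤ) - 1 else -1) = 0 := by
    have := Fintype.sum_equiv (Equiv.subLeft t)
      (fun s => if t - s = 0 then (p:ℤ) - 1 else -1)
      (fun s => if s = 0 then (p:ℤ) - 1 else -1) (fun s => rfl)
    rw [this, hB]
  have hD3' : ∀ s : ZMod p, (if t - s = 0 then (p:ℤ) else 0) = if s = t then (p:ℤ) else 0 := by
    intro s
    have : (t - s = 0) ↔ (s = t) := by rw [sub_eq_zero, eq_comm]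
    simp only [this]
  have hD1 : ∑ s : ZMod p, (if s = 0 then (p:ℤ) else 0) * (if t - s = 0 then (p:ℤ) else 0)
      = if t = 0 then (p:ℤ)^2 else 0 := by
    have h : ∀ s : ZMod p, (if s = 0 then (p:ℤ) else 0) * (if t - s = 0 then (p:ℤ) else 0)
        = if s = 0 then (if t = 0 then (p:ℤ)^2 else 0) else 0 := by
      intro s
      by_cases h1 : s = 0
      · subst h1
        simp only [if_pos rfl, sub_zero]
        split_ifs <;> ring
      · simp [h1]
    rw [Finset.sum_congr rfl (fun s _ => h s),
      Finset.sum_ite_eq' Finset.univ (0 : ZMod p)]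
    simp
  have hD2 : ∑ s : ZMod p, (if s = 0 then (p:ℤ) else 0) = (p:ℤ) := by
    rw [Finset.sum_ite_eq' Finset.univ (0 : ZMod p)]; simp
  have hD3 : ∑ s : ZMod p, (if t - s = 0 then (p:ℤ) else 0) = (p:ℤ) := by
    rw [Finset.sum_congr rfl (fun s _ => hD3' s),
      Finset.sum_ite_eq' Finset.univ t]
    simp
  have hD4 : ∑ _s : ZMod p, (1:ℤ) = (p:ℤ) := by simp [hcard]
  have hA : ∑ _s : ZMod p, ((p:ℤ))^2 = (p:ℤ)^3 := by
    rw [Finset.sum_const]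
    rw [nsmul_eq_mul, hcard]
    ring
  rw [hB, hC, hD1, hD2, hD3, hD4, hA]
  split_ifs <;> ring

theorem sqCount_prime (m : ℕ) (t : ZMod p) (hp2 : p ≠ 2) :
    ((sqCount (ZMod p) (4 * m + 1) t : ℤ))
      = (p : ℤ)^(4*m) + (p : ℤ)^(2*m) * quadraticChar (ZMod p) t := by
  induction m generalizing t with
  | zero =>
    have h1 : 4 * 0 + 1 = 1 := rfl
    rw [h1, sqCount_one_var p t hp2]
    simp only [Nat.mul_zero, pow_zero]
    ring
  | succ m ih =>
    have hk : 4 * (m+1) + 1 = 4 + (4 * m + 1) := by ring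
    rw [hk, sqCount_conv]
    push_cast
    have hsum1 : ∑ s : ZMod p,
        ((sqCount (ZMod p) 4 s : ℤ)) * ((sqCount (ZMod p) (4*m+1) (t - s) : ℤ))
        = ∑ s : ZMod p, ((p:ℤ)^3 - p + (if s = 0 then (p:ℤ)^2 else 0))
            * ((sqCount (ZMod p) (4*m+1) (t - s) : ℤ)) :=
      Finset.sum_congr rfl (fun s _ => by rw [sqCount_four_var p s hp2])
    rw [hsum1]
    have expand : ∀ s : ZMod p, ((p:ℤ)^3 - p + (if s = 0 then (p:ℤ)^2 else 0))
        * ((sqCount (ZMod p) (4*m+1) (t - s) : ℤ))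
        = ((p:ℤ)^3 - p) * (sqCount (ZMod p) (4*m+1) (t - s) : ℤ)
          + (if s = 0 then (p:ℤ)^2 * (sqCount (ZMod p) (4*m+1) (t - s) : ℤ) else 0) := by
      intro s; split_ifs <;> ring
    rw [Finset.sum_congr rfl (fun s _ => expand s), Finset.sum_add_distrib, ← Finset.mul_sum]
    rw [Finset.sum_ite_eq' Finset.univ (0 : ZMod p)]
    have htot : ∑ s : ZMod p, ((sqCount (ZMod p) (4*m+1) (t - s) : ℤ)) = (p:ℤ)^(4*m+1) := by
      have h1 : ∑ s : ZMod p, ((sqCount (ZMod p) (4*m+1) (t - s) : ℤ))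
          = ∑ s : ZMod p, ((sqCount (ZMod p) (4*m+1) s : ℤ)) :=
        Fintype.sum_equiv (Equiv.subLeft t) _ _ (fun s => rfl)
      rw [h1, ← Nat.cast_sum]
      rw [sqCount_total]
      push_cast [ZMod.card]
      ring
    rw [htot]
    simp only [Finset.mem_univ, if_true]
    rw [ih (t - 0)]
    rw [sub_zero]
    ring

theorem linear_count {F : Type*} [Field F] [Fintype F] [DecidableEq F] {k : ℕ}
    (c : Fin (k+1) → F) (i0 : Fin (k+1)) (hc : c i0 ≠ 0) (b : F) :
    (Finset.univ.filter (fun z : Fin (k+1) → F => ∑ i, c i * z i = b)).card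
      = Fintype.card F ^ k := by
  classical
  set f : (Fin (k+1) → F) → F := fun z => ∑ i, c i * z i with hf
  have hadd : ∀ z w, f (z + w) = f z + f w := by
    intro z w
    simp only [hf, Pi.add_apply, mul_add]
    rw [Finset.sum_add_distrib]
  have hwb : ∀ b : F, ∃ w, f w = b := by
    intro b
    refine ⟨fun i => if i = i0 then b * (c i0)⁻¹ else 0, ?_⟩
    simp only [hf, mul_ite, mul_zero]
    rw [Finset.sum_ite_eq' Finset.univ i0 (fun i => c i * (b * (c i0)⁻¹))]
    simp only [Finset.mem_univ, if_true]
    field_simp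
  have hcardeq : ∀ b : F,
      (Finset.univ.filter (fun z => f z = b)).card
        = (Finset.univ.filter (fun z => f z = 0)).card := by
    intro b
    obtain ⟨w, hw⟩ := hwb b
    refine (Finset.card_equiv (Equiv.addRight w) ?_).symm
    intro z
    simp only [mem_filter, mem_univ, true_and, Equiv.coe_addRight]
    rw [hadd z w, hw]
    constructor
    · intro h; rw [h, zero_add]
    · intro h; linear_combination h
  have htot : ∑ b : F, (Finset.univ.filter (fun z => f z = b)).card
      = Fintype.card F ^ (k+1) := by
    rw [← Finset.card_eq_sum_card_fiberwise (fun x _ => mem_univ (f x))]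
    rw [Finset.card_univ]
    simp [Fintype.card_fun]
  rw [Finset.sum_congr rfl (fun b _ => hcardeq b), Finset.sum_const, Finset.card_univ,
    smul_eq_mul] at htot
  have hpos : 0 < Fintype.card F := Fintype.card_pos
  have h0 : (Finset.univ.filter (fun z => f z = 0)).card = Fintype.card F ^ k := by
    have := htot
    rw [pow_succ'] at this
    exact Nat.eq_of_mul_eq_mul_left hpos this
  rw [hcardeq b, h0]

theorem sqCount_lift (p : ℕ) [hp : Fact p.Prime] (hp2 : p ≠ 2) (a : ℕ) (ha : 1 ≤ a)
    (k : ℕ) (n : ℤ) (hn : ¬ (p : ℤ) ∣ n) :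
    sqCount (ZMod (p^(a+1))) (k+1) ((n : ZMod (p^(a+1))))
      = p^k * sqCount (ZMod (p^a)) (k+1) ((n : ZMod (p^a))) := by
  classical
  have hppos : 0 < p := hp.out.pos
  haveI : NeZero (p ^ a) := ⟨pow_ne_zero _ hppos.ne'⟩
  haveI : NeZero (p ^ (a+1)) := ⟨pow_ne_zero _ hppos.ne'⟩
  set R := ZMod (p^(a+1))
  set Q := ZMod (p^a)
  set φ : R →+* Q := ZMod.castHom (pow_dvd_pow p (Nat.le_succ a)) Q with hφdef
  set π : R →+* ZMod p := ZMod.castHom (dvd_pow_self p (Nat.succ_ne_zero a)) (ZMod p) with hπdef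
  set ρ : Q →+* ZMod p := ZMod.castHom (dvd_pow_self p (by omega : a ≠ 0)) (ZMod p) with hρdef
  -- value of π on natural casts
  have hπnat : ∀ c : ℕ, π ((c : ℕ) : R) = ((c : ℕ) : ZMod p) := fun c => map_natCast π c
  have hπval : ∀ u : R, π u = ((u.val : ℕ) : ZMod p) := by
    intro u
    conv_lhs => rw [← ZMod.natCast_zmod_val u]
    exact hπnat u.val
  have hφval : ∀ u : R, φ u = ((u.val : ℕ) : Q) := by
    intro u
    conv_lhs => rw [← ZMod.natCast_zmod_val u]
    exact map_natCast φ u.val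
  have hρval : ∀ c : Q, ρ c = ((c.val : ℕ) : ZMod p) := by
    intro c
    conv_lhs => rw [← ZMod.natCast_zmod_val c]
    exact map_natCast ρ c.val
  -- K1
  have K1 : ∀ u : R, ((p : R)^a * u = 0) ↔ π u = 0 := by
    intro u
    conv_lhs => rw [← ZMod.natCast_zmod_val u]
    rw [hπval u]
    have h1 : (p : R)^a * ((u.val : ℕ) : R) = (((p^a * u.val : ℕ) : ℕ) : R) := by rw [Nat.cast_mul, Nat.cast_pow]
    rw [h1, ZMod.natCast_eq_zero_iff, ZMod.natCast_eq_zero_iff]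
    constructor
    · rintro ⟨c, hc⟩
      exact ⟨c, Nat.eq_of_mul_eq_mul_left (pow_pos hppos a)
        (by rw [hc, pow_succ]; ring)⟩
    · rintro ⟨c, hc⟩
      exact ⟨c, by rw [hc, pow_succ]; ring⟩
  have K1' : ∀ u v : R, ((p : R)^a * u = (p : R)^a * v) ↔ π u = π v := by
    intro u v
    constructor
    · intro h
      have h2 : (p : R)^a * (u - v) = 0 := by rw [mul_sub, h, sub_self]
      have h3 := (K1 _).1 h2
      rw [map_sub] at h3
      exact sub_eq_zero.1 h3
    · intro h
      have h2 : π (u - v) = 0 := by rw [map_sub, h, sub_self]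
      have h3 := (K1 (u - v)).2 h2
      rw [mul_sub] at h3
      exact sub_eq_zero.1 h3
  -- K2
  have K2 : ∀ D : R, φ D = 0 → D = (p : R)^a * ((D.val / p^a : ℕ) : R) := by
    intro D hD
    rw [hφval D, ZMod.natCast_eq_zero_iff] at hD
    conv_lhs => rw [← ZMod.natCast_zmod_val D, ← Nat.div_mul_cancel hD]
    push_cast
    ring
  -- K3
  have K3' : ((p : R)^a)^2 = 0 := by
    have h1 : (((p^(2*a) : ℕ)) : R) = 0 :=
      (ZMod.natCast_eq_zero_iff _ _).2 (pow_dvd_pow p (by omega))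
    push_cast at h1
    rw [← pow_mul, Nat.mul_comm]
    exact h1
  have K4 : ∀ w : R, φ w = 0 →
      (p : R)^a * (((((w.val / p^a : ℕ) : ZMod p)).val : ℕ) : R) = w := by
    intro w hw
    have h1 := K2 w hw
    conv_rhs => rw [h1]
    rw [(K1' _ _)]
    rw [map_natCast π, map_natCast π, ZMod.natCast_zmod_val]
  have K5 : ∀ z : ZMod p, ((((p:R)^a * ((z.val : ℕ) : R)).val / p^a : ℕ) : ZMod p) = z := by
    intro z
    have h1 : (p:R)^a * ((z.val : ℕ) : R) = ((p^a * z.val : ℕ) : R) := by rw [Nat.cast_mul, Nat.cast_pow]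
    have hlt : p^a * z.val < p^(a+1) := by
      have := ZMod.val_lt z
      calc p^a * z.val < p^a * p := by
            exact (Nat.mul_lt_mul_left (pow_pos hppos a)).2 this
        _ = p^(a+1) := by rw [pow_succ]
    rw [h1, ZMod.val_natCast, Nat.mod_eq_of_lt hlt,
      Nat.mul_div_cancel_left _ (pow_pos hppos a), ZMod.natCast_zmod_val]
  have hφpa : φ ((p:R)^a) = 0 := by
    rw [map_pow, map_natCast φ]
    have : (((p^a : ℕ)) : Q) = 0 := ZMod.natCast_self (p^a)
    push_cast at this
    exact this
  -- main counting
  simp only [sqCount]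
  have hmaps : ∀ x ∈ Finset.univ.filter (fun x : Fin (k+1) → R => ∑ i, x i ^ 2 = (n : R)),
      (fun i => φ (x i)) ∈ Finset.univ.filter (fun y : Fin (k+1) → Q => ∑ i, y i ^ 2 = (n : Q)) := by
    intro x hx
    rw [Finset.mem_filter] at hx ⊢
    refine ⟨Finset.mem_univ _, ?_⟩
    have h1 := congrArg φ hx.2
    rw [map_sum, map_intCast] at h1
    simpa [map_pow] using h1
  rw [Finset.card_eq_sum_card_fiberwise hmaps]
  have hfiber : ∀ y ∈ Finset.univ.filter (fun y : Fin (k+1) → Q => ∑ i, y i ^ 2 = (n : Q)),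
      ((Finset.univ.filter (fun x : Fin (k+1) → R => ∑ i, x i ^ 2 = (n : R))).filter
        (fun x => (fun i => φ (x i)) = y)).card = p^k := by
    intro y hy
    rw [Finset.mem_filter] at hy
    have hy2 := hy.2
    set L : Fin (k+1) → R := fun i => (((y i).val : ℕ) : R) with hL
    have hφL : ∀ i, φ (L i) = y i := by
      intro i
      rw [hL]
      exact (map_natCast φ _).trans (ZMod.natCast_zmod_val _)
    have hπL : ∀ i, π (L i) = ρ (y i) := by
      intro i
      rw [hL, hρval]
      exact map_natCast π _
    set D : R := (∑ i, L i ^ 2) - (n : R) with hD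
    have hφD : φ D = 0 := by
      rw [hD, map_sub, map_sum, map_intCast]
      have : ∀ i, φ (L i ^ 2) = y i ^ 2 := fun i => by rw [map_pow, hφL]
      rw [Finset.sum_congr rfl (fun i _ => this i), hy2]
      ring
    set d : ℕ := D.val / p^a with hd
    have hDd : D = (p : R)^a * (d : R) := K2 D hφD
    set g : (Fin (k+1) → ZMod p) → (Fin (k+1) → R) :=
      fun z i => L i + (p : R)^a * (((z i).val : ℕ) : R) with hg
    have hgeq : ∀ z : Fin (k+1) → ZMod p,
        (∑ i, (g z i) ^ 2 = (n : R)) ↔ ∑ i, (2 * ρ (y i)) * z i = -((d : ℕ) : ZMod p) := by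
      intro z
      have hsq : ∀ i, (g z i)^2 = L i ^ 2 + (p : R)^a * (2 * L i * (((z i).val : ℕ) : R)) := by
        intro i
        simp only [hg]
        linear_combination ((((z i).val : ℕ) : R))^2 * K3'
      rw [Finset.sum_congr rfl (fun i _ => hsq i), Finset.sum_add_distrib, ← Finset.mul_sum]
      set W : R := ∑ i, 2 * L i * (((z i).val : ℕ) : R) with hW
      have hπW : π W = ∑ i, (2 * ρ (y i)) * z i := by
        rw [hW, map_sum]
        refine Finset.sum_congr rfl (fun i _ => ?_)
        have hz : π ((((z i).val : ℕ)) : R) = z i :=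
          (map_natCast π _).trans (ZMod.natCast_zmod_val _)
        rw [map_mul, map_mul, hπL, hz, map_ofNat]
      constructor
      · intro h
        have h1 : D + (p:R)^a * W = 0 := by rw [hD]; linear_combination h
        rw [hDd] at h1
        have h2 : (p:R)^a * ((d:R) + W) = 0 := by linear_combination h1
        have h3 := (K1 _).1 h2
        rw [map_add, hπW, map_natCast] at h3
        linear_combination h3
      · intro h
        have h3 : π ((d:R) + W) = 0 := by
          rw [map_add, hπW, map_natCast]
          linear_combination h
        have h2 := (K1 _).2 h3
        rw [mul_add, ← hDd, hD] at h2
        linear_combination h2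
    have hn0 : ((n : ZMod p)) ≠ 0 := by
      rw [Ne, ZMod.intCast_zmod_eq_zero_iff_dvd]
      exact hn
    have hsum0 : ∑ i, ρ (y i) ^ 2 = ((n : ZMod p)) := by
      have h1 := congrArg ρ hy2
      rw [map_sum, map_intCast] at h1
      simpa [map_pow] using h1
    have hex : ∃ i0, ρ (y i0) ≠ 0 := by
      by_contra hcon
      push_neg at hcon
      have h0 : (0 : ZMod p) = ((n : ZMod p)) := by
        rw [← hsum0]
        exact (Finset.sum_eq_zero (fun i _ => by simp [hcon i])).symm
      exact hn0 h0.symm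
    obtain ⟨i0, hi0⟩ := hex
    have h2ne : (2 : ZMod p) ≠ 0 := by
      have h1 : ((2:ℕ) : ZMod p) ≠ 0 := by
        rw [Ne, ZMod.natCast_eq_zero_iff]
        intro hdvd
        exact hp2 ((Nat.prime_dvd_prime_iff_eq hp.out Nat.prime_two).1 hdvd)
      simpa using h1
    have hcard_lin : (Finset.univ.filter (fun z : Fin (k+1) → ZMod p =>
        ∑ i, (2 * ρ (y i)) * z i = -((d : ℕ) : ZMod p))).card = p^k := by
      rw [linear_count (fun i => 2 * ρ (y i)) i0 (mul_ne_zero h2ne hi0) _]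
      rw [ZMod.card]
    have hE : (Finset.univ.filter (fun z : Fin (k+1) → ZMod p =>
        ∑ i, (g z i) ^ 2 = (n : R))).card = p^k := by
      rw [Finset.filter_congr (fun z _ => hgeq z)]
      exact hcard_lin
    rw [← hE]
    refine Finset.card_bij' (fun x _ => fun i => ((((x i - L i).val / p^a : ℕ) : ZMod p)))
      (fun z _ => g z) ?_ ?_ ?_ ?_
    · -- fwd maps into E
      intro x hx
      rw [Finset.mem_filter, Finset.mem_filter] at hx
      obtain ⟨⟨-, hx1⟩, hx2⟩ := hx
      have hginv : g (fun i => ((((x i - L i).val / p^a : ℕ) : ZMod p))) = x := by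
        funext i
        simp only [hg]
        have hwi : φ (x i - L i) = 0 := by
          rw [map_sub, hφL]
          have := congrFun hx2 i
          rw [this]
          ring
        rw [K4 _ hwi]
        ring
      rw [Finset.mem_filter]
      refine ⟨Finset.mem_univ _, ?_⟩
      rw [hginv]
      exact hx1
    · -- bwd maps into fiber
      intro z hz
      rw [Finset.mem_filter] at hz
      rw [Finset.mem_filter, Finset.mem_filter]
      refine ⟨⟨Finset.mem_univ _, hz.2⟩, ?_⟩
      funext i
      simp only [hg]
      rw [map_add, map_mul, hφL, hφpa]
      ring
    · -- left inverse : g (fwd x) = x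
      intro x hx
      rw [Finset.mem_filter, Finset.mem_filter] at hx
      obtain ⟨⟨-, hx1⟩, hx2⟩ := hx
      funext i
      simp only [hg]
      have hwi : φ (x i - L i) = 0 := by
        rw [map_sub, hφL]
        have := congrFun hx2 i
        rw [this]
        ring
      rw [K4 _ hwi]
      ring
    · -- right inverse : fwd (g z) = z
      intro z hz
      funext i
      simp only [hg]
      rw [add_sub_cancel_left]
      exact K5 (z i)
  rw [Finset.sum_congr rfl hfiber, Finset.sum_const, smul_eq_mul, Nat.mul_comm]

theorem sqCount_mul (r s : ℕ) [NeZero r] [NeZero s] (h : Nat.Coprime r s) (k : ℕ) (n : ℤ) :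
    sqCount (ZMod (r*s)) k ((n : ZMod (r*s)))
      = sqCount (ZMod r) k ((n : ZMod r)) * sqCount (ZMod s) k ((n : ZMod s)) := by
  haveI : NeZero (r*s) := ⟨mul_ne_zero (NeZero.ne r) (NeZero.ne s)⟩
  set e := ZMod.chineseRemainder h with he
  set E : (Fin k → ZMod (r*s)) ≃ (Fin k → ZMod r) × (Fin k → ZMod s) :=
    (Equiv.arrowCongr (Equiv.refl (Fin k)) e.toEquiv).trans
      (Equiv.arrowProdEquivProdArrow _ _ _) with hE
  have hfst : ∀ (x : Fin k → ZMod (r*s)) (i : Fin k), (E x).1 i = (e (x i)).1 := fun x i => rfl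
  have hsnd : ∀ (x : Fin k → ZMod (r*s)) (i : Fin k), (E x).2 i = (e (x i)).2 := fun x i => rfl
  have key : ∀ x : Fin k → ZMod (r*s),
      (∑ i, x i ^ 2 = ((n : ZMod (r*s)))) ↔
        ((∑ i, (E x).1 i ^ 2 = ((n : ZMod r))) ∧ (∑ i, (E x).2 i ^ 2 = ((n : ZMod s)))) := by
    intro x
    have h1 : ∑ i, x i ^ 2 = ((n : ZMod (r*s))) ↔
        e (∑ i, x i ^ 2) = e ((n : ZMod (r*s))) := (EmbeddingLike.apply_eq_iff_eq e).symm
    rw [h1, map_sum, map_intCast]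
    have h2 : ∀ i, e (x i ^ 2) = ((e (x i)).1 ^ 2, (e (x i)).2 ^ 2) := by
      intro i
      rw [map_pow]
      rfl
    rw [Finset.sum_congr rfl (fun i _ => h2 i)]
    rw [Prod.ext_iff]
    simp only [Prod.fst_sum, Prod.snd_sum, Prod.fst_intCast, Prod.snd_intCast]
    constructor
    · intro ⟨a, b⟩
      exact ⟨by rw [← a]; exact Finset.sum_congr rfl (fun i _ => (hfst x i).symm ▸ rfl),
        by rw [← b]; exact Finset.sum_congr rfl (fun i _ => rfl)⟩
    · intro ⟨a, b⟩
      exact ⟨by rw [← a]; exact Finset.sum_congr rfl (fun i _ => rfl),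
        by rw [← b]; exact Finset.sum_congr rfl (fun i _ => rfl)⟩
  unfold sqCount
  rw [← Finset.card_product]
  refine Finset.card_equiv E ?_
  intro x
  simp only [mem_filter, mem_univ, true_and, Finset.mem_product]
  exact key x

theorem sqCount_one_mod (k : ℕ) (n : ℤ) : sqCount (ZMod 1) k ((n : ZMod 1)) = 1 := by
  unfold sqCount
  rw [Finset.filter_true_of_mem (fun x _ => Subsingleton.elim _ _), Finset.card_univ]
  simp [Fintype.card_fun]

noncomputable def jmf (m : ℕ) (n : ℤ) : ArithmeticFunction ℝ :=
  ⟨fun d => ((moebius d : ℝ))^2 / (d : ℝ)^(2*m) * ((jacobiSym n d : ℤ) : ℝ), by simp⟩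

theorem jmf_apply (m : ℕ) (n : ℤ) (d : ℕ) :
    jmf m n d = ((moebius d : ℝ))^2 / (d : ℝ)^(2*m) * ((jacobiSym n d : ℤ) : ℝ) := rfl

theorem jmf_mult (m : ℕ) (n : ℤ) : (jmf m n).IsMultiplicative := by
  constructor
  · rw [jmf_apply]
    simp [jacobiSym.one_right]
  · intro a b hab
    by_cases ha : a = 0
    · subst ha
      rw [Nat.coprime_zero_left] at hab
      subst hab
      simp [jmf_apply]
    by_cases hb : b = 0
    · subst hb
      rw [Nat.coprime_zero_right] at hab
      subst hab
      simp [jmf_apply]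
    rw [jmf_apply, jmf_apply, jmf_apply]
    rw [isMultiplicative_moebius.map_mul_of_coprime hab]
    rw [jacobiSym.mul_right' n ha hb]
    have hA : ((a : ℝ))^(2*m) ≠ 0 := pow_ne_zero _ (Nat.cast_ne_zero.2 ha)
    have hB : ((b : ℝ))^(2*m) ≠ 0 := pow_ne_zero _ (Nat.cast_ne_zero.2 hb)
    push_cast
    field_simp
    ring

theorem sum_divisors_jmf_mul (m : ℕ) (n : ℤ) (a b : ℕ) (hab : Nat.Coprime a b) :
    ∑ d ∈ (a*b).divisors, jmf m n d
      = (∑ d ∈ a.divisors, jmf m n d) * (∑ d ∈ b.divisors, jmf m n d) := by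
  have h1 : ∀ c : ℕ, ∑ d ∈ c.divisors, jmf m n d = ((jmf m n) * ArithmeticFunction.zeta) c := by
    intro c
    rw [ArithmeticFunction.coe_mul_zeta_apply]
  rw [h1, h1, h1]
  exact ((jmf_mult m n).mul isMultiplicative_zeta.natCast).map_mul_of_coprime hab


theorem sqCount_congr {r s : ℕ} [NeZero r] [NeZero s] (h : r = s) (k : ℕ) (n : ℤ) :
    sqCount (ZMod r) k ((n : ZMod r)) = sqCount (ZMod s) k ((n : ZMod s)) := by
  subst h
  rfl

theorem sqCount_prime_pow (p : ℕ) [hp : Fact p.Prime] (hp2 : p ≠ 2) (m c : ℕ)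
    (n : ℤ) (hn : ¬ (p:ℤ) ∣ n) :
    ((sqCount (ZMod (p^(c+1))) (4*m+1) ((n : ZMod (p^(c+1))))) : ℤ)
      = ((p:ℤ)^(4*m))^c
        * ((p:ℤ)^(4*m) + (p:ℤ)^(2*m) * quadraticChar (ZMod p) ((n : ZMod p))) := by
  induction c with
  | zero =>
    have h1 : p^(0+1) = p := by norm_num
    rw [sqCount_congr h1 (4*m+1) n, sqCount_prime p m ((n : ZMod p)) hp2, pow_zero, one_mul]
  | succ c ih =>
    have hlift := sqCount_lift p hp2 (c+1) (by omega) (4*m) n hn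
    rw [hlift]
    push_cast
    rw [ih]
    ring

theorem sum_divisors_jmf_prime_pow (p : ℕ) [hp : Fact p.Prime] (m : ℕ) (n : ℤ)
    (b : ℕ) (hb : 1 ≤ b) :
    ∑ d ∈ (p^b).divisors, jmf m n d = 1 + ((jacobiSym n p : ℤ) : ℝ) / (p:ℝ)^(2*m) := by
  rw [Nat.sum_divisors_prime_pow hp.out]
  have hterm : ∀ i ∈ Finset.range (b+1), jmf m n (p^i)
      = (if i = 0 then (1:ℝ) else 0)
        + (if i = 1 then ((jacobiSym n p : ℤ) : ℝ) / (p:ℝ)^(2*m) else 0) := by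
    intro i _
    match i with
    | 0 => simp [jmf_apply, jacobiSym.one_right]
    | 1 =>
      have hμ : ArithmeticFunction.moebius (p^1) = -1 := by
        rw [pow_one, ArithmeticFunction.moebius_apply_prime hp.out]
      rw [jmf_apply, hμ]
      norm_num [pow_one]
      ring
    | (i+2) =>
      rw [jmf_apply]
      have hμ : ArithmeticFunction.moebius (p^(i+2)) = 0 := by
        rw [ArithmeticFunction.moebius_apply_prime_pow hp.out (by omega)]
        simp [show ¬ (i+2 = 1) by omega]
      simp [hμ, show ¬ (i+2 = 0) by omega, show ¬ (i+2 = 1) by omega]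
  rw [Finset.sum_congr rfl hterm, Finset.sum_add_distrib]
  rw [Finset.sum_ite_eq' (Finset.range (b+1)) 0 (fun _ => (1:ℝ)),
    Finset.sum_ite_eq' (Finset.range (b+1)) 1
      (fun _ => ((jacobiSym n p : ℤ) : ℝ) / (p:ℝ)^(2*m))]
  have h0 : (0 : ℕ) ∈ Finset.range (b+1) := by simp
  have h1 : (1 : ℕ) ∈ Finset.range (b+1) := by simp; omega
  rw [if_pos h0, if_pos h1]

theorem natCard_eq_sqCount (r : ℕ) [NeZero r] (k : ℕ) (c : ZMod r) :
    Nat.card {x : Fin k → ZMod r // ∑ i, x i ^ 2 = c} = sqCount (ZMod r) k c := by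
  rw [Nat.card_eq_fintype_card, Fintype.card_subtype]
  rfl

theorem main_aux (m : ℕ) (n : ℤ) : ∀ r : ℕ, 0 < r → Odd r → IsCoprime n (r : ℤ) →
    ((Nat.card {x : Fin (4*m+1) → ZMod r // ∑ i, x i ^ 2 = ((n : ZMod r))} : ℝ))
      = (r : ℝ)^(4*m) * ∑ d ∈ r.divisors, jmf m n d := by
  intro r
  induction r using Nat.recOnPosPrimePosCoprime with
  | prime_pow p b hpp hb =>
    intro _ hodd hcop
    haveI hfact : Fact p.Prime := ⟨hpp⟩
    have hppos : 0 < p := hfact.out.pos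
    haveI : NeZero (p^b) := ⟨pow_ne_zero _ hppos.ne'⟩
    have hp2 : p ≠ 2 := by
      rintro rfl
      have heven : Even (2^b) := Nat.even_pow.mpr ⟨even_two, hb.ne'⟩
      exact (Nat.not_odd_iff_even.mpr heven) hodd
    have hcp : IsCoprime n ((p : ℤ)) := by
      refine IsCoprime.of_isCoprime_of_dvd_right hcop ?_
      push_cast
      exact dvd_pow_self _ hb.ne'
    have hn : ¬ (p:ℤ) ∣ n := by
      intro hdvd
      have := hcp.isUnit_of_dvd' hdvd dvd_rfl
      rw [Int.isUnit_iff] at this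
      rcases this with h | h
      · have hp1 : p = 1 := by exact_mod_cast h
        exact absurd hp1 hfact.out.one_lt.ne'
      · have h0 : (0:ℤ) ≤ (p:ℤ) := Int.natCast_nonneg p
        omega
    obtain ⟨c, rfl⟩ : ∃ c, b = c+1 := ⟨b-1, by omega⟩
    rw [natCard_eq_sqCount]
    have hcount := sqCount_prime_pow p hp2 m c n hn
    have hcountR : ((sqCount (ZMod (p^(c+1))) (4*m+1) ((n : ZMod (p^(c+1))))) : ℝ)
        = (((p:ℝ)^(4*m))^c
          * ((p:ℝ)^(4*m) + (p:ℝ)^(2*m) * ((quadraticChar (ZMod p) ((n : ZMod p)) : ℤ) : ℝ))) := by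
      exact_mod_cast congrArg (fun z : ℤ => (z : ℝ)) hcount
    rw [hcountR, sum_divisors_jmf_prime_pow p m n (c+1) (by omega)]
    have hjac : (jacobiSym n p : ℤ) = quadraticChar (ZMod p) ((n : ZMod p)) := by
      rw [← jacobiSym.legendreSym.to_jacobiSym]
      rfl
    rw [hjac]
    have hpne : (p:ℝ) ≠ 0 := Nat.cast_ne_zero.2 hppos.ne'
    push_cast
    field_simp
    ring
  | zero =>
    intro h
    omega
  | one =>
    intro _ _ _
    rw [natCard_eq_sqCount, sqCount_one_mod]
    simp [Nat.divisors_one, jmf_apply, jacobiSym.one_right]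
  | coprime a b ha hb hab iha ihb =>
    intro hpos hodd hcop
    have ha0 : 0 < a := by omega
    have hb0 : 0 < b := by omega
    haveI : NeZero a := ⟨ha0.ne'⟩
    haveI : NeZero b := ⟨hb0.ne'⟩
    haveI : NeZero (a*b) := ⟨(Nat.mul_pos ha0 hb0).ne'⟩
    have hodda : Odd a := (Nat.odd_mul.mp hodd).1
    have hoddb : Odd b := (Nat.odd_mul.mp hodd).2
    have hcopa : IsCoprime n ((a : ℤ)) := by
      rw [Nat.cast_mul] at hcop
      exact IsCoprime.of_mul_right_left hcop
    have hcopb : IsCoprime n ((b : ℤ)) := by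
      rw [Nat.cast_mul] at hcop
      exact IsCoprime.of_mul_right_right hcop
    rw [natCard_eq_sqCount, sqCount_mul a b hab]
    have hA := iha ha0 hodda hcopa
    have hB := ihb hb0 hoddb hcopb
    rw [natCard_eq_sqCount] at hA hB
    rw [sum_divisors_jmf_mul m n a b hab]
    push_cast
    rw [hA, hB]
    push_cast
    ring

theorem count_sum_of_squares_4m_add_1 (m r : ℕ) (hr : 0 < r) (hodd : Odd r)
    (n : ℤ) (hn : IsCoprime n (r : ℤ)) :
    (Nat.card {x : Fin (4 * m + 1) → ZMod r // ∑ i, (x i) ^ 2 = (n : ZMod r)} : ℝ) =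
      (r : ℝ) ^ (4 * m) * ∑ d ∈ r.divisors,
        ((moebius d : ℝ) ^ 2 / (d : ℝ) ^ (2 * m)) * (jacobiSym n d : ℝ) := by
  rw [main_aux m n r hr hodd hn]
  exact congrArg _ (Finset.sum_congr rfl (fun d _ => jmf_apply m n d))
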